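/- Suppose z and t are vertices of a horoball H of the Groves–Manning space X with 𝒟(z) = 𝒟(t) = m ≥ δ. If d(z,t) ≤ 2n + 3 then d^m(z,t) ≤ 3·2ⁿ, and if d(z,t) ≤ 2n + 2 then d^m(z,t) ≤ 2^{n+1}; consequently B_{2n+3}(z) ∩ H(m) ⊆ B̂_{3·2ⁿ}(z) and B_{2n+2}(z) ∩ H(m) ⊆ B̂_{2^{n+1}}(z). In particular, for any integer k > 0, B_k(z) ∩ H(m) ⊆ B̂_{2^{⌊k/2⌋+1}}(z). -/

import Mathlib

/-! Core definitions: Cayley graphs, combinatorial horoballs, and the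
Groves–Manning space of a relatively hyperbolic pair, as a locally finite graph. -/

open SimpleGraph

namespace GM

variable {G : Type} [Group G] {ι : Type}

/-- Adjacency in the Cayley graph of `G` with respect to the symmetrized set `S`. -/
def cayleyAdj (S : Set G) (a b : G) : Prop :=
  a ≠ b ∧ (a⁻¹ * b ∈ S ∨ b⁻¹ * a ∈ S)

/-- The Cayley graph of `G` with respect to `S`. -/
def cayleyGraph (S : Set G) : SimpleGraph G where
  Adj := cayleyAdj S
  symm := ⟨by rintro a b ⟨h1, h2⟩; exact ⟨h1.symm, h2.symm⟩⟩
  loopless := ⟨fun a h => h.1 rfl⟩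

/-- The full subgraph of the Cayley graph on the left cosets of `P i`
(the union over all cosets; distinct cosets lie in distinct components). -/
def cosetGraph (S : Set G) (P : ι → Subgroup G) (i : ι) : SimpleGraph G where
  Adj a b := cayleyAdj S a b ∧ a⁻¹ * b ∈ P i
  symm := ⟨by
    rintro a b ⟨⟨h0, h1⟩, h2⟩
    refine ⟨⟨h0.symm, h1.symm⟩, ?_⟩
    have := (P i).inv_mem h2
    simpa [mul_inv_rev] using this⟩
  loopless := ⟨fun a h => h.1.1 rfl⟩

/-- Vertices of the Groves–Manning space: the group `G` (depth 0), together with,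
for each `i : ι` and `g : G`, a vertex `(g, k)` at depth `k ≥ 1` in the combinatorial
horoball over the coset `g • (P i)`. -/
def GMVert (G ι : Type) : Type := G ⊕ (ι × G × ℕ+)

/-- The depth function `𝒟` on vertices. -/
def depth : GMVert G ι → ℕ
  | .inl _ => 0
  | .inr (_, _, k) => (k : ℕ)

/-- The underlying group element ("base") of a vertex. -/
def baseElt : GMVert G ι → G
  | .inl g => g
  | .inr (_, g, _) => g

/-- The vertex over `g` at depth `l` in the horoballs for the subgroup `P i`. -/
def atLevel (i : ι) (g : G) : ℕ → GMVert G ι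
  | 0 => .inl g
  | (l + 1) => .inr (i, g, ⟨l + 1, Nat.succ_pos l⟩)

/-- Horizontal adjacency at depth `k ≥ 1` inside a horoball: two distinct elements of a
common left coset of `P i` whose distance in the coset graph is at most `2 ^ k`. -/
def horizAdjPos (S : Set G) (P : ι → Subgroup G) (i : ι) (k : ℕ) (a b : G) : Prop :=
  a ≠ b ∧ a⁻¹ * b ∈ P i ∧ (cosetGraph S P i).Reachable a b ∧ (cosetGraph S P i).dist a b ≤ 2 ^ k

/-- Horizontal adjacency at depth `l` (at depth `0` this is an edge of the coset graph). -/
def hAdjL (S : Set G) (P : ι → Subgroup G) (i : ι) (l : ℕ) (a b : G) : Prop :=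
  match l with
  | 0 => (cosetGraph S P i).Adj a b
  | (m + 1) => horizAdjPos S P i (m + 1) a b

/-- Adjacency in the Groves–Manning space: Cayley edges at depth 0, vertical edges
joining `(g, k)` to `(g, k+1)`, and horizontal horoball edges. -/
def gmAdj (S : Set G) (P : ι → Subgroup G) : GMVert G ι → GMVert G ι → Prop
  | .inl a, .inl b => cayleyAdj S a b
  | .inl a, .inr (_, b, k) => a = b ∧ (k : ℕ) = 1
  | .inr (_, a, k), .inl b => a = b ∧ (k : ℕ) = 1
  | .inr (i, a, k), .inr (j, b, l) =>
      i = j ∧ ((a = b ∧ ((l : ℕ) = (k : ℕ) + 1 ∨ (k : ℕ) = (l : ℕ) + 1)) ∨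
        ((k : ℕ) = (l : ℕ) ∧ horizAdjPos S P i (k : ℕ) a b))

/-- The (1-skeleton of the) Groves–Manning space of `(G, {P i}, S)`. -/
def GMGraph (S : Set G) (P : ι → Subgroup G) : SimpleGraph (GMVert G ι) where
  Adj := gmAdj S P
  symm := ⟨by
    rintro (a | ⟨i, a, k⟩) (b | ⟨j, b, l⟩) h
    · exact ⟨h.1.symm, h.2.symm⟩
    · exact ⟨h.1.symm, h.2⟩
    · exact ⟨h.1.symm, h.2⟩
    · obtain ⟨rfl, (⟨rfl, hv⟩ | ⟨hk, hh⟩)⟩ := h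
      · exact ⟨rfl, Or.inl ⟨rfl, hv.symm⟩⟩
      · refine ⟨rfl, Or.inr ⟨hk.symm, hh.1.symm, ?_, hh.2.2.1.symm, ?_⟩⟩
        · have := (P i).inv_mem hh.2.1; simpa [mul_inv_rev] using this
        · rw [SimpleGraph.dist_comm, ← hk]; exact hh.2.2.2⟩
  loopless := ⟨by
    rintro (a | ⟨i, a, k⟩) h
    · exact h.1 rfl
    · obtain ⟨-, (⟨-, hv⟩ | ⟨-, hh⟩)⟩ := h
      · omega
      · exact hh.1 rfl⟩

variable (S : Set G) (P : ι → Subgroup G)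

/-- The identity vertex `*` of the Groves–Manning space. -/
def idv : GMVert G ι := Sum.inl 1

/-- The ball `B_r(c)` of radius `r` about `c`, in the edge-path metric of the
Groves–Manning space. -/
def gball (c : GMVert G ι) (r : ℕ) : Set (GMVert G ι) :=
  {v | (GMGraph S P).dist c v ≤ r}

/-- The horoball over the coset `t • (P i)`. -/
def horoball (i : ι) (t : G) : Set (GMVert G ι) :=
  fun v => match v with
  | .inl g => t⁻¹ * g ∈ P i
  | .inr (j, g, _) => j = i ∧ t⁻¹ * g ∈ P i

/-- `H(m)`: the vertices of the horoball at depth exactly `m`. -/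
def horoSphere (i : ι) (t : G) (m : ℕ) : Set (GMVert G ι) :=
  {v | v ∈ horoball P i t ∧ depth v = m}

/-- `H^m`: the `m`-horoball, all vertices of the horoball at depth at least `m`. -/
def horoDeep (i : ι) (t : G) (m : ℕ) : Set (GMVert G ι) :=
  {v | v ∈ horoball P i t ∧ m ≤ depth v}

/-- A walk is geodesic if its length realizes the graph distance of its endpoints. -/
def IsGeodesic {V : Type} (Γ : SimpleGraph V) {a b : V} (p : Γ.Walk a b) : Prop :=
  p.length = Γ.dist a b

/-- `Γ` is `δ`-hyperbolic: all geodesic triangles are `δ`-slim. -/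
def SlimTriangles {V : Type} (Γ : SimpleGraph V) (δ : ℕ) : Prop :=
  ∀ ⦃a b c : V⦄ (p : Γ.Walk a b) (q : Γ.Walk b c) (r : Γ.Walk a c),
    IsGeodesic Γ p → IsGeodesic Γ q → IsGeodesic Γ r →
    ∀ v ∈ r.support,
      (∃ w ∈ p.support, Γ.dist v w ≤ δ) ∨ (∃ w ∈ q.support, Γ.dist v w ≤ δ)

end GM

namespace GM

variable {G : Type} [Group G] {ι : Type}

/-- The graph `H(m)`: the full subgraph of the Groves–Manning space on the vertices of
depth exactly `m` in the horoball over `t • (P i)` (its edges are the horizontal edges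
at depth `m`). -/
def levelGraph (S : Set G) (P : ι → Subgroup G) (i : ι) (t : G) (m : ℕ) :
    SimpleGraph (GMVert G ι) where
  Adj v w := (GMGraph S P).Adj v w ∧ v ∈ horoball P i t ∧ w ∈ horoball P i t ∧
    depth v = m ∧ depth w = m
  symm := ⟨by rintro v w ⟨h1, h2, h3, h4, h5⟩; exact ⟨h1.symm, h3, h2, h5, h4⟩⟩
  loopless := ⟨fun v h => (GMGraph S P).loopless.irrefl v h.1⟩

/-- `d^m(z,·)`-ball: `B̂_n(z)` is the set of vertices `v` of `H(m)` with `d^m(v,z) ≤ n`,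
where `d^m` is the edge-path distance in the graph `H(m)`. -/
def hatB (S : Set G) (P : ι → Subgroup G) (i : ι) (t : G) (m : ℕ)
    (z : GMVert G ι) (n : ℕ) : Set (GMVert G ι) :=
  {v | v ∈ horoSphere P i t m ∧ (levelGraph S P i t m).Reachable z v ∧
    (levelGraph S P i t m).dist z v ≤ n}

end GM
namespace GMaux
open GM SimpleGraph
set_option linter.unusedSectionVars false

variable {G : Type} [Group G] {ι : Type}
variable {S : Set G} {P : ι → Subgroup G} {i : ι} {g : G}

lemma depth_atLevel (i : ι) (x : G) (l : ℕ) : depth (atLevel i x l : GMVert G ι) = l := by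
  cases l <;> rfl

lemma baseElt_atLevel (i : ι) (x : G) (l : ℕ) : baseElt (atLevel i x l : GMVert G ι) = x := by
  cases l <;> rfl

lemma atLevel_mem_horoball {x : G} (hx : g⁻¹ * x ∈ P i) (l : ℕ) :
    (atLevel i x l : GMVert G ι) ∈ horoball P i g := by
  cases l with
  | zero => exact hx
  | succ l => exact ⟨rfl, hx⟩

lemma adj_up (S : Set G) (P : ι → Subgroup G) (i : ι) (x : G) (l : ℕ) :
    (GMGraph S P).Adj (atLevel i x l) (atLevel i x (l + 1)) := by
  cases l with
  | zero => exact ⟨rfl, rfl⟩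
  | succ l => exact ⟨rfl, Or.inl ⟨rfl, Or.inl rfl⟩⟩

/-- Vertical walk in a horoball, from level `l` up to level `l + k`. -/
def vWalk (S : Set G) (P : ι → Subgroup G) (i : ι) (x : G) (l : ℕ) :
    (k : ℕ) → (GMGraph S P).Walk (atLevel i x l) (atLevel i x (l + k))
  | 0 => Walk.nil
  | (k + 1) => (vWalk S P i x l k).concat (adj_up S P i x (l + k))

lemma length_vWalk (S : Set G) (P : ι → Subgroup G) (i : ι) (x : G) (l k : ℕ) :
    (vWalk S P i x l k).length = k := by
  induction k with
  | zero => rfl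
  | succ k ih => simp [vWalk, Walk.length_concat, ih]

lemma support_vWalk (S : Set G) (P : ι → Subgroup G) (i : ι) (x : G) (l k : ℕ) :
    ∀ v ∈ (vWalk S P i x l k).support, ∃ j, j ≤ k ∧ v = atLevel i x (l + j) := by
  induction k with
  | zero => intro v hv; simp [vWalk] at hv; exact ⟨0, le_refl _, by simpa using hv⟩
  | succ k ih =>
    intro v hv
    rw [vWalk, Walk.support_concat] at hv
    rw [List.mem_append] at hv
    rcases hv with hv | hv
    · obtain ⟨j, hj, rfl⟩ := ih v hv
      exact ⟨j, by omega, rfl⟩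
    · exact ⟨k + 1, le_refl _, by simpa using hv⟩

lemma adj_depth {u w : GMVert G ι} (h : (GMGraph S P).Adj u w) :
    depth u ≤ depth w + 1 ∧ depth w ≤ depth u + 1 := by
  cases u with
  | inl a =>
    cases w with
    | inl b => simp [depth]
    | inr q =>
      obtain ⟨j, b, k⟩ := q
      obtain ⟨-, h2⟩ := h
      simp [depth, h2]
  | inr q =>
    obtain ⟨j, a, k⟩ := q
    cases w with
    | inl b =>
      obtain ⟨-, h2⟩ := h
      simp [depth, h2]
    | inr r =>
      obtain ⟨j', b, l⟩ := r
      obtain ⟨-, h2⟩ := h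
      rcases h2 with ⟨-, h3 | h3⟩ | ⟨h3, -⟩ <;> simp only [depth] <;> omega

lemma adj_base_desc {u w : GMVert G ι} (h : (GMGraph S P).Adj u w) (hd : depth w < depth u) :
    baseElt u = baseElt w := by
  cases u with
  | inl a =>
    cases w with
    | inl b => simp [depth] at hd
    | inr q => obtain ⟨j, b, k⟩ := q; simp [depth] at hd
  | inr q =>
    obtain ⟨j, a, k⟩ := q
    cases w with
    | inl b => exact h.1
    | inr r =>
      obtain ⟨j', b, l⟩ := r
      obtain ⟨-, h2⟩ := h
      rcases h2 with ⟨h3, -⟩ | ⟨h3, -⟩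
      · exact h3
      · exfalso; simp only [depth] at hd; omega

lemma walk_depth {u w : GMVert G ι} (p : (GMGraph S P).Walk u w) :
    depth u ≤ depth w + p.length ∧ depth w ≤ depth u + p.length := by
  induction p with
  | nil => simp
  | cons ha p ih =>
    have h1 := adj_depth ha
    simp only [Walk.length_cons]
    omega

lemma walk_base {u w : GMVert G ι} (p : (GMGraph S P).Walk u w)
    (h : p.length + depth w ≤ depth u) : baseElt u = baseElt w := by
  induction p with
  | nil => rfl
  | @cons u v w ha p ih =>
    have h1 := adj_depth ha
    have h2 := walk_depth p
    simp only [Walk.length_cons] at h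
    have hd : depth v < depth u := by omega
    rw [adj_base_desc ha hd]
    exact ih (by omega)

lemma adj_horo {u w : GMVert G ι} (hw : w ∈ horoball P i g) (hd : 1 ≤ depth w)
    (h : (GMGraph S P).Adj u w) : u ∈ horoball P i g := by
  cases w with
  | inl b => simp [depth] at hd
  | inr q =>
    obtain ⟨j, b, k⟩ := q
    obtain ⟨rfl, hb⟩ := hw
    cases u with
    | inl a =>
      obtain ⟨rfl, -⟩ := h
      exact hb
    | inr r =>
      obtain ⟨j', a, k'⟩ := r
      obtain ⟨rfl, h2⟩ := h
      rcases h2 with ⟨rfl, -⟩ | ⟨-, hh⟩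
      · exact ⟨rfl, hb⟩
      · refine ⟨rfl, ?_⟩
        have hab : a⁻¹ * b ∈ P j' := hh.2.1
        have : g⁻¹ * a = (g⁻¹ * b) * (a⁻¹ * b)⁻¹ := by group
        rw [this]
        exact mul_mem hb (inv_mem hab)

lemma deep_walk (m : ℕ) {u w : GMVert G ι} (p : (GMGraph S P).Walk u w) :
    p.length ≤ m → w ∈ horoball P i g → m ≤ depth w →
    u ∈ horoball P i g ∧ depth w ≤ depth u + p.length := by
  induction p with
  | nil => intro _ hw _; exact ⟨hw, by simp⟩
  | @cons u v w ha p ih =>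
    intro hlen hw hdw
    simp only [Walk.length_cons] at hlen ⊢
    obtain ⟨hmem, hdep⟩ := ih (by omega) hw hdw
    have h1 : 1 ≤ depth v := by omega
    have h2 := adj_depth ha
    exact ⟨adj_horo hmem h1 ha, by omega⟩

lemma cosetWalk_mem {a b : G} (p : (cosetGraph S P i).Walk a b) : a⁻¹ * b ∈ P i := by
  induction p with
  | nil => simpa using (P i).one_mem
  | @cons a v b ha p ih =>
    have h2 : a⁻¹ * v ∈ P i := ha.2
    have : a⁻¹ * b = (a⁻¹ * v) * (v⁻¹ * b) := by group
    rw [this]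
    exact mul_mem h2 ih

lemma coset_reach (hP : Subgroup.closure (S ∩ (P i : Set G)) = P i)
    {x : G} (hx : x ∈ P i) (a : G) : (cosetGraph S P i).Reachable a (a * x) := by
  let T : Subgroup G :=
    { carrier := {y | ∀ b : G, (cosetGraph S P i).Reachable b (b * y)}
      one_mem' := fun b => by simpa using Reachable.refl b
      mul_mem' := by
        intro y z hy hz b
        have := (hy b).trans (hz (b * y))
        simpa [mul_assoc] using this
      inv_mem' := by
        intro y hy b
        have := (hy (b * y⁻¹)).symm
        simpa using this }
  have hST : S ∩ (P i : Set G) ⊆ (T : Set G) := by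
    intro s hs b
    by_cases h1 : s = 1
    · subst h1; simpa using Reachable.refl b
    · have hadj : (cosetGraph S P i).Adj b (b * s) := by
        refine ⟨⟨?_, Or.inl ?_⟩, ?_⟩
        · intro hbs
          exact h1 (by simpa using hbs.symm)
        · simpa using hs.1
        · simpa using hs.2
      exact hadj.reachable
  have hPT : P i ≤ T := by
    rw [← hP]
    exact Subgroup.closure_le T |>.mpr hST
  exact hPT hx a

lemma walk_split {V : Type} {Γ : SimpleGraph V} :
    ∀ (n : ℕ) {a b : V} (p : Γ.Walk a b), n ≤ p.length →
      ∃ (c : V) (q : Γ.Walk a c) (r : Γ.Walk c b), q.length = n ∧ q.length + r.length = p.length := by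
  intro n
  induction n with
  | zero => intro a b p _; exact ⟨a, Walk.nil, p, rfl, by simp⟩
  | succ n ih =>
    intro a b p hp
    cases p with
    | nil => simp at hp
    | @cons a v b ha p' =>
      simp only [Walk.length_cons] at hp
      obtain ⟨c, q, r, hq, hr⟩ := ih p' (by omega)
      refine ⟨c, Walk.cons ha q, r, by simp [hq], ?_⟩
      simp only [Walk.length_cons]
      omega

lemma adj_classify {u w : GMVert G ι} (hu : u ∈ horoball P i g) (hw : w ∈ horoball P i g)
    (h : (GMGraph S P).Adj u w) :
    (baseElt u = baseElt w ∧ (depth w = depth u + 1 ∨ depth u = depth w + 1)) ∨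
    (depth u = depth w ∧ (cosetGraph S P i).Reachable (baseElt u) (baseElt w) ∧
      (cosetGraph S P i).dist (baseElt u) (baseElt w) ≤ 2 ^ depth u) := by
  cases u with
  | inl a =>
    cases w with
    | inl b =>
      right
      have hb : a⁻¹ * b ∈ P i := by
        have heq : a⁻¹ * b = (g⁻¹ * a)⁻¹ * (g⁻¹ * b) := by group
        rw [heq]
        exact mul_mem (inv_mem hu) hw
      have hadj : (cosetGraph S P i).Adj a b := ⟨h, hb⟩
      refine ⟨rfl, hadj.reachable, ?_⟩
      have := dist_le hadj.toWalk
      simpa [depth, baseElt] using this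
    | inr q =>
      obtain ⟨j, b, k⟩ := q
      obtain ⟨rfl, hk⟩ := h
      exact Or.inl ⟨rfl, Or.inl (by simp [depth, hk])⟩
  | inr q =>
    obtain ⟨j, a, k⟩ := q
    cases w with
    | inl b =>
      obtain ⟨heq, hk⟩ := h
      exact Or.inl ⟨heq, Or.inr (by simp [depth, hk])⟩
    | inr r =>
      obtain ⟨j', b, l⟩ := r
      obtain ⟨rfl, h2⟩ := h
      obtain ⟨rfl, -⟩ := hu
      rcases h2 with ⟨rfl, hv⟩ | ⟨hkl, hh⟩
      · exact Or.inl ⟨rfl, by simpa [depth] using hv⟩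
      · right
        refine ⟨by simpa [depth] using hkl, hh.2.2.1, hh.2.2.2⟩

/-- Maximum depth along a list of vertices. -/
def listMax (l : List (GMVert G ι)) : ℕ := l.foldr (fun v r => max (depth v) r) 0

lemma le_listMax {l : List (GMVert G ι)} {v : GMVert G ι} (hv : v ∈ l) :
    depth v ≤ listMax l := by
  induction l with
  | nil => simp at hv
  | cons a l ih =>
    rcases List.mem_cons.mp hv with rfl | hv
    · simp [listMax]
    · have := ih hv
      simp only [listMax, List.foldr_cons] at *
      omega

/-- Maximum depth along a walk. -/
def maxD {u w : GMVert G ι} (p : (GMGraph S P).Walk u w) : ℕ := listMax p.support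

lemma maxD_nil {u : GMVert G ι} : maxD (Walk.nil : (GMGraph S P).Walk u u) = depth u := by
  simp [maxD, listMax]

lemma maxD_cons {u v w : GMVert G ι} (h : (GMGraph S P).Adj u v) (p : (GMGraph S P).Walk v w) :
    maxD (Walk.cons h p) = max (depth u) (maxD p) := by
  simp [maxD, listMax, Walk.support_cons]

lemma mem_le_maxD {u w : GMVert G ι} (p : (GMGraph S P).Walk u w) {v : GMVert G ι}
    (hv : v ∈ p.support) : depth v ≤ maxD p := le_listMax hv

/-- Counting coset-distance covered by a walk inside a horoball. -/
lemma claimW {u w : GMVert G ι} (p : (GMGraph S P).Walk u w)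
    (hH : ∀ v ∈ p.support, v ∈ horoball P i g) :
    ∃ c : (cosetGraph S P i).Walk (baseElt u) (baseElt w),
      (c.length : ℤ) ≤ ((p.length : ℤ) - ((maxD p : ℤ) - depth u) - ((maxD p : ℤ) - depth w))
        * 2 ^ (maxD p) := by
  induction p with
  | nil => exact ⟨Walk.nil, by simp [maxD_nil]⟩
  | @cons u v w ha p ih =>
    have hH' : ∀ x ∈ p.support, x ∈ horoball P i g := by
      intro x hx
      exact hH x (by simp [Walk.support_cons, hx])
    have hu : u ∈ horoball P i g := hH u (Walk.start_mem_support _)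
    have hv : v ∈ horoball P i g := hH' v (Walk.start_mem_support _)
    obtain ⟨c', hc'⟩ := ih hH'
    have hdv : depth v ≤ maxD p := mem_le_maxD p (Walk.start_mem_support _)
    have hdw : depth w ≤ maxD p := mem_le_maxD p (Walk.end_mem_support _)
    have hwd := walk_depth p
    have hadjd := adj_depth ha
    rw [maxD_cons]
    simp only [Walk.length_cons]
    have hpow : (0:ℤ) < 2 ^ (maxD p) := by positivity
    rcases adj_classify hu hv ha with ⟨hbase, hdd⟩ | ⟨hdep, hreach, hdist⟩
    · -- vertical step
      refine ⟨c'.copy hbase.symm rfl, ?_⟩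
      rw [Walk.length_copy]
      rcases le_or_gt (depth u) (maxD p) with hcase | hcase
      · rw [max_eq_right hcase]
        refine le_trans hc' ?_
        apply mul_le_mul_of_nonneg_right _ (le_of_lt hpow)
        push_cast
        omega
      · rw [max_eq_left (le_of_lt hcase)]
        -- here depth u = maxD p + 1, depth v = maxD p
        have hvv : depth v = maxD p := by omega
        have huu : depth u = maxD p + 1 := by omega
        have hX : (0:ℤ) ≤ (p.length : ℤ) - ((maxD p : ℤ) - depth w) := by
          push_cast
          omega
        calc (c'.length : ℤ)
            ≤ ((p.length : ℤ) - ((maxD p : ℤ) - depth v) - ((maxD p : ℤ) - depth w)) * 2 ^ (maxD p) := hc'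
          _ = ((p.length : ℤ) - ((maxD p : ℤ) - depth w)) * 2 ^ (maxD p) := by rw [hvv]; ring
          _ ≤ ((p.length : ℤ) - ((maxD p : ℤ) - depth w)) * 2 ^ (maxD p) * 2 := by nlinarith
          _ = (((p.length + 1 : ℕ) : ℤ) - ((depth u : ℤ) - depth u) - ((depth u : ℤ) - depth w)) * 2 ^ (depth u) := by
              rw [huu]; push_cast; ring
    · -- horizontal step
      have hdu : depth u ≤ maxD p := by omega
      rw [max_eq_right hdu]
      obtain ⟨e, he⟩ := hreach.exists_walk_length_eq_dist
      refine ⟨e.append c', ?_⟩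
      rw [Walk.length_append]
      have he2 : (e.length : ℤ) ≤ 2 ^ (maxD p) := by
        rw [he]
        have h1 : (2:ℕ) ^ (depth u) ≤ 2 ^ (maxD p) := Nat.pow_le_pow_right (by norm_num) hdu
        exact_mod_cast le_trans hdist h1
      have heq : (((p.length : ℤ) + 1) - ((maxD p : ℤ) - depth u) - ((maxD p : ℤ) - depth w)) * 2 ^ (maxD p)
          = ((p.length : ℤ) - ((maxD p : ℤ) - depth v) - ((maxD p : ℤ) - depth w)) * 2 ^ (maxD p) + 2 ^ (maxD p) := by
        rw [show (depth v : ℤ) = depth u by exact_mod_cast hdep.symm]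
        ring
      push_cast
      push_cast at heq
      rw [heq]
      push_cast at hc' he2
      linarith

/-- From a bound on coset distance, build a walk in the level graph `H(m)`. -/
lemma claim1 (g : G) (m' : ℕ) :
    ∀ (q : ℕ) (a b : G), g⁻¹ * a ∈ P i → g⁻¹ * b ∈ P i →
      (cosetGraph S P i).Reachable a b →
      (cosetGraph S P i).dist a b ≤ q * 2 ^ (m' + 1) →
      ∃ ω : (levelGraph S P i g (m' + 1)).Walk (atLevel i a (m' + 1)) (atLevel i b (m' + 1)),
        ω.length ≤ q := by
  intro q
  induction q with
  | zero =>
    intro a b ha hb hreach hdist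
    obtain ⟨ρ, hρ⟩ := hreach.exists_walk_length_eq_dist
    have h0 : ρ.length = 0 := by omega
    cases ρ with
    | nil => exact ⟨Walk.nil, by simp⟩
    | cons h p => simp at h0
  | succ q ih =>
    intro a b ha hb hreach hdist
    have hedge : ∀ c : G, g⁻¹ * c ∈ P i → a ≠ c →
        (cosetGraph S P i).Reachable a c →
        (cosetGraph S P i).dist a c ≤ 2 ^ (m' + 1) →
        (levelGraph S P i g (m' + 1)).Adj (atLevel i a (m' + 1)) (atLevel i c (m' + 1)) := by
      intro c hc hne hr hd
      refine ⟨⟨rfl, Or.inr ⟨rfl, hne, ?_, hr, hd⟩⟩, atLevel_mem_horoball ha _,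
        atLevel_mem_horoball hc _, depth_atLevel i a _, depth_atLevel i c _⟩
      have : a⁻¹ * c = (g⁻¹ * a)⁻¹ * (g⁻¹ * c) := by group
      rw [this]; exact mul_mem (inv_mem ha) hc
    by_cases hd : (cosetGraph S P i).dist a b ≤ 2 ^ (m' + 1)
    · by_cases hab : a = b
      · subst hab; exact ⟨Walk.nil, by simp⟩
      · exact ⟨Walk.cons (hedge b hb hab hreach hd) Walk.nil, by simp⟩
    · push_neg at hd
      obtain ⟨ρ, hρ⟩ := hreach.exists_walk_length_eq_dist
      obtain ⟨c, q1, q2, hq1, hq2⟩ := walk_split (2 ^ (m' + 1)) ρ (by omega)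
      rw [hρ] at hq2
      have hac : a⁻¹ * c ∈ P i := cosetWalk_mem q1
      have hcP : g⁻¹ * c ∈ P i := by
        have : g⁻¹ * c = (g⁻¹ * a) * (a⁻¹ * c) := by group
        rw [this]; exact mul_mem ha hac
      have hdac : (cosetGraph S P i).dist a c ≤ 2 ^ (m' + 1) := by
        have := dist_le q1; omega
      have hdcb : (cosetGraph S P i).dist c b ≤ q * 2 ^ (m' + 1) := by
        have h2 := dist_le q2
        have h3 : (q + 1) * 2 ^ (m' + 1) = q * 2 ^ (m' + 1) + 2 ^ (m' + 1) := by ring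
        rw [h3] at hdist
        omega
      have hane : a ≠ c := by
        intro h
        subst h
        have h2 := dist_le q2
        have hpow1 : 0 < 2 ^ m' := pow_pos (by norm_num) m'
        omega
      obtain ⟨ω, hω⟩ := ih c b hcP hb q2.reachable hdcb
      exact ⟨Walk.cons (hedge c hcP hane q1.reachable hdac) ω, by simpa using by omega⟩

lemma horoSphere_repr {m' : ℕ} {z : GMVert G ι} (hz : z ∈ horoSphere P i g (m' + 1)) :
    ∃ x : G, g⁻¹ * x ∈ P i ∧ z = atLevel i x (m' + 1) := by
  obtain ⟨hz1, hz2⟩ := hz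
  cases z with
  | inl a => simp [depth] at hz2
  | inr q =>
    obtain ⟨j, x, k⟩ := q
    obtain ⟨rfl, hx⟩ := hz1
    refine ⟨x, hx, ?_⟩
    have : k = (⟨m' + 1, Nat.succ_pos m'⟩ : ℕ+) := by
      apply PNat.coe_injective
      exact hz2
    rw [this]
    rfl

lemma dist_ge_depth {u w : GMVert G ι} (hr : (GMGraph S P).Reachable u w) :
    depth u ≤ depth w + (GMGraph S P).dist u w ∧
      depth w ≤ depth u + (GMGraph S P).dist u w := by
  obtain ⟨p, hp⟩ := hr.exists_walk_length_eq_dist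
  have := walk_depth p
  omega

/-- Key geometric lemma: using `δ`-slim triangles, geodesics between two points of
`H(m)` stay in the horoball, which bounds the coset distance between their bases. -/
lemma key (hP : Subgroup.closure (S ∩ (P i : Set G)) = P i)
    {δ : ℕ} (hhyp : SlimTriangles (GMGraph S P) δ)
    (m' : ℕ) (hδm : δ ≤ m' + 1)
    {z t : GMVert G ι} (hz : z ∈ horoSphere P i g (m' + 1))
    (ht : t ∈ horoSphere P i g (m' + 1)) :
    (cosetGraph S P i).Reachable (baseElt z) (baseElt t) ∧
      ∃ h : ℕ, m' + 1 ≤ h ∧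
        ((cosetGraph S P i).dist (baseElt z) (baseElt t) : ℤ) ≤
          (((GMGraph S P).dist z t : ℤ) - 2 * ((h : ℤ) - (m' + 1))) * 2 ^ h := by
  classical
  obtain ⟨bz, hbzP, rfl⟩ := horoSphere_repr hz
  obtain ⟨bt, hbtP, rfl⟩ := horoSphere_repr ht
  rw [baseElt_atLevel, baseElt_atLevel]
  by_cases hne : bz = bt
  · subst hne
    refine ⟨Reachable.refl _, m' + 1, le_refl _, ?_⟩
    rw [dist_self, dist_self]
    simp
  · have hmemP : bz⁻¹ * bt ∈ P i := by
      have : bz⁻¹ * bt = (g⁻¹ * bz)⁻¹ * (g⁻¹ * bt) := by group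
      rw [this]; exact mul_mem (inv_mem hbzP) hbtP
    have hreachC : (cosetGraph S P i).Reachable bz bt := by
      have := coset_reach hP hmemP bz
      simpa [mul_inv_cancel_left] using this
    refine ⟨hreachC, ?_⟩
    set D0 := (cosetGraph S P i).dist bz bt with hD0def
    have hcast : m' + 1 + D0 = m' + D0 + 1 := by omega
    have hD : D0 ≤ 2 ^ (m' + D0 + 1) := by
      have h1 : D0 < 2 ^ D0 := Nat.lt_two_pow_self
      have h2 : (2:ℕ) ^ D0 ≤ 2 ^ (m' + D0 + 1) := Nat.pow_le_pow_right (by norm_num) (by omega)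
      omega
    -- the two vertical sides of the triangle
    let p : (GMGraph S P).Walk (atLevel i bz (m' + 1)) (atLevel i bz (m' + D0 + 1)) :=
      (vWalk S P i bz (m' + 1) D0).copy rfl (by rw [hcast])
    let q0 : (GMGraph S P).Walk (atLevel i bt (m' + 1)) (atLevel i bt (m' + D0 + 1)) :=
      (vWalk S P i bt (m' + 1) D0).copy rfl (by rw [hcast])
    have hedge : (GMGraph S P).Adj (atLevel i bz (m' + D0 + 1)) (atLevel i bt (m' + D0 + 1)) :=
      ⟨rfl, Or.inr ⟨rfl, hne, hmemP, hreachC, hD⟩⟩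
    let q : (GMGraph S P).Walk (atLevel i bz (m' + D0 + 1)) (atLevel i bt (m' + 1)) :=
      Walk.cons hedge q0.reverse
    have hplen : p.length = D0 := by simp [p, length_vWalk]
    have hqlen : q.length = D0 + 1 := by simp [q, q0, length_vWalk]
    have hreachΓ : (GMGraph S P).Reachable (atLevel i bz (m' + 1)) (atLevel i bt (m' + 1)) :=
      (p.append q).reachable
    obtain ⟨r, hrlen⟩ := hreachΓ.exists_walk_length_eq_dist
    -- p is geodesic
    have hpgeo : IsGeodesic (GMGraph S P) p := by
      have h1 := dist_le p
      have h2 := dist_ge_depth p.reachable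
      rw [depth_atLevel, depth_atLevel] at h2
      rw [IsGeodesic, hplen]
      omega
    -- q is geodesic
    have hqgeo : IsGeodesic (GMGraph S P) q := by
      have h1 := dist_le q
      have h2 := dist_ge_depth q.reachable
      rw [depth_atLevel, depth_atLevel] at h2
      rw [IsGeodesic, hqlen]
      rw [hqlen] at h1
      -- distance cannot equal D0
      have hne2 : (GMGraph S P).dist (atLevel i bz (m' + D0 + 1)) (atLevel i bt (m' + 1)) ≠ D0 := by
        intro hcontra
        obtain ⟨ω, hω⟩ := Reachable.exists_walk_length_eq_dist q.reachable
        have hbase := walk_base ω (by rw [hω, hcontra, depth_atLevel, depth_atLevel]; omega)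
        rw [baseElt_atLevel, baseElt_atLevel] at hbase
        exact hne hbase
      omega
    have hrgeo : IsGeodesic (GMGraph S P) r := hrlen
    -- all vertices of r lie in the horoball
    have hsupp : ∀ v ∈ r.support, v ∈ horoball P i g := by
      intro v hvr
      have hwit : ∃ w, w ∈ horoball P i g ∧ m' + 1 ≤ depth w ∧
          (GMGraph S P).Reachable (atLevel i bz (m' + 1)) w ∧
          (GMGraph S P).dist v w ≤ δ := by
        rcases hhyp p q r hpgeo hqgeo hrgeo v hvr with ⟨w, hw, hdw⟩ | ⟨w, hw, hdw⟩
        · have hw' : w ∈ (vWalk S P i bz (m' + 1) D0).support := by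
            simpa [p, Walk.support_copy] using hw
          obtain ⟨j, hj, rfl⟩ := support_vWalk S P i bz (m' + 1) D0 w hw'
          exact ⟨_, atLevel_mem_horoball hbzP _, by rw [depth_atLevel]; omega,
            (vWalk S P i bz (m' + 1) j).reachable, hdw⟩
        · rw [Walk.support_cons] at hw
          rcases List.mem_cons.mp hw with rfl | hw
          · exact ⟨_, atLevel_mem_horoball hbzP _, by rw [depth_atLevel]; omega, p.reachable, hdw⟩
          · rw [Walk.support_reverse, List.mem_reverse] at hw
            have hw' : w ∈ (vWalk S P i bt (m' + 1) D0).support := by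
              simpa [q0, Walk.support_copy] using hw
            obtain ⟨j, hj, rfl⟩ := support_vWalk S P i bt (m' + 1) D0 w hw'
            refine ⟨_, atLevel_mem_horoball hbtP _, by rw [depth_atLevel]; omega,
              hreachΓ.trans (vWalk S P i bt (m' + 1) j).reachable, hdw⟩
      obtain ⟨w, hwH, hwdepth, hwreach, hwdist⟩ := hwit
      have hzv : (GMGraph S P).Reachable (atLevel i bz (m' + 1)) v := (r.takeUntil v hvr).reachable
      have hvw : (GMGraph S P).Reachable v w := hzv.symm.trans hwreach
      obtain ⟨ω, hω⟩ := hvw.exists_walk_length_eq_dist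
      exact (deep_walk (m' + 1) ω (by omega) hwH hwdepth).1
    -- count coset distance along r
    obtain ⟨c, hc⟩ := claimW r hsupp
    refine ⟨maxD r, ?_, ?_⟩
    · have := mem_le_maxD r (Walk.start_mem_support r)
      rw [depth_atLevel] at this
      exact this
    · have hdl : ((cosetGraph S P i).dist bz bt : ℤ) ≤ (c.length : ℤ) := by
        have h2 : (cosetGraph S P i).dist bz bt ≤ c.length := dist_le c
        exact_mod_cast h2
      simp only [depth_atLevel, hrlen] at hc
      refine le_trans hdl (le_trans hc (le_of_eq ?_))
      push_cast
      ring

lemma nat_l1 (j : ℕ) : 2 * j + 3 ≤ 3 * 2 ^ j := by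
  induction j with
  | zero => norm_num
  | succ j ih =>
    have : (2:ℕ) ^ (j + 1) = 2 * 2 ^ j := by ring
    rw [this]
    omega

lemma nat_l2 (j : ℕ) : 2 * j + 2 ≤ 2 ^ (j + 1) := by
  induction j with
  | zero => norm_num
  | succ j ih =>
    have : (2:ℕ) ^ (j + 1 + 1) = 2 * 2 ^ (j + 1) := by ring
    rw [this]
    omega

lemma arithA (m n k : ℕ) :
    ((2 * n + 3 : ℤ) - 2 * k) * 2 ^ (m + k) ≤ (3 * 2 ^ (n + m) : ℕ) := by
  rcases le_or_gt k n with hk | hk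
  · have h1 : (2 * (n - k) + 3 : ℕ) ≤ 3 * 2 ^ (n - k) := nat_l1 _
    have h2 : ((2 * n + 3 : ℤ) - 2 * k) = ((2 * (n - k) + 3 : ℕ) : ℤ) := by push_cast; omega
    rw [h2]
    have h3 : ((2 * (n - k) + 3 : ℕ) : ℤ) * 2 ^ (m + k) ≤ ((3 * 2 ^ (n - k) : ℕ) : ℤ) * 2 ^ (m + k) := by
      have : (0:ℤ) < 2 ^ (m + k) := by positivity
      exact mul_le_mul_of_nonneg_right (by exact_mod_cast h1) (le_of_lt this)
    refine le_trans h3 (le_of_eq ?_)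
    push_cast
    have hexp : n - k + (m + k) = n + m := by omega
    rw [mul_assoc, ← pow_add, hexp]
  · rcases eq_or_lt_of_le (show n + 1 ≤ k from hk) with hk2 | hk2
    · -- k = n + 1
      rw [← hk2]
      have : ((2 * n + 3 : ℤ) - 2 * (n + 1 : ℕ)) = 1 := by push_cast; ring
      rw [this, one_mul]
      have h4 : (2:ℤ) ^ (m + (n + 1)) = 2 * 2 ^ (n + m) := by
        rw [show m + (n + 1) = (n + m) + 1 by omega, pow_succ]
        ring
      rw [h4]
      have : (0:ℤ) < 2 ^ (n + m) := by positivity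
      push_cast
      linarith
    · -- k ≥ n + 2
      have hneg : ((2 * n + 3 : ℤ) - 2 * k) ≤ 0 := by
        have : (n + 2 : ℤ) ≤ k := by exact_mod_cast hk2
        linarith
      have := mul_nonpos_of_nonpos_of_nonneg hneg (by positivity : (0:ℤ) ≤ 2 ^ (m + k))
      have hpos : (0:ℤ) ≤ (3 * 2 ^ (n + m) : ℕ) := by positivity
      linarith

lemma arithB (m n k : ℕ) :
    ((2 * n + 2 : ℤ) - 2 * k) * 2 ^ (m + k) ≤ (2 ^ (n + 1 + m) : ℕ) := by
  rcases le_or_gt k n with hk | hk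
  · have h1 : (2 * (n - k) + 2 : ℕ) ≤ 2 ^ (n - k + 1) := nat_l2 _
    have h2 : ((2 * n + 2 : ℤ) - 2 * k) = ((2 * (n - k) + 2 : ℕ) : ℤ) := by push_cast; omega
    rw [h2]
    have h3 : ((2 * (n - k) + 2 : ℕ) : ℤ) * 2 ^ (m + k) ≤ ((2 ^ (n - k + 1) : ℕ) : ℤ) * 2 ^ (m + k) := by
      have : (0:ℤ) < 2 ^ (m + k) := by positivity
      exact mul_le_mul_of_nonneg_right (by exact_mod_cast h1) (le_of_lt this)
    refine le_trans h3 (le_of_eq ?_)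
    push_cast
    have hexp : n - k + 1 + (m + k) = n + 1 + m := by omega
    rw [← pow_add, hexp]
  · have hneg : ((2 * n + 2 : ℤ) - 2 * k) ≤ 0 := by
      have : (n + 1 : ℤ) ≤ k := by exact_mod_cast hk
      linarith
    have := mul_nonpos_of_nonpos_of_nonneg hneg (by positivity : (0:ℤ) ≤ 2 ^ (m + k))
    have hpos : (0:ℤ) ≤ ((2 ^ (n + 1 + m) : ℕ) : ℤ) := by positivity
    linarith

/-- Main statement, first half. -/
lemma stmtA (hP : Subgroup.closure (S ∩ (P i : Set G)) = P i)
    {δ : ℕ} (hhyp : SlimTriangles (GMGraph S P) δ)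
    (m' : ℕ) (hδm : δ ≤ m' + 1) (n : ℕ) {z t : GMVert G ι}
    (hz : z ∈ horoSphere P i g (m' + 1)) (ht : t ∈ horoSphere P i g (m' + 1))
    (hd : (GMGraph S P).dist z t ≤ 2 * n + 3) :
    (levelGraph S P i g (m' + 1)).Reachable z t ∧
      (levelGraph S P i g (m' + 1)).dist z t ≤ 3 * 2 ^ n := by
  obtain ⟨hreachC, h, hmh, hineq⟩ := key hP hhyp m' hδm hz ht
  obtain ⟨k, rfl⟩ := Nat.exists_eq_add_of_le hmh
  have hstep : ((cosetGraph S P i).dist (baseElt z) (baseElt t) : ℤ)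
      ≤ ((2 * n + 3 : ℤ) - 2 * k) * 2 ^ (m' + 1 + k) := by
    refine le_trans hineq ?_
    apply mul_le_mul_of_nonneg_right _ (by positivity : (0:ℤ) ≤ 2 ^ (m' + 1 + k))
    have : ((GMGraph S P).dist z t : ℤ) ≤ (2 * n + 3 : ℤ) := by exact_mod_cast hd
    push_cast
    linarith
  have hfin : ((cosetGraph S P i).dist (baseElt z) (baseElt t) : ℤ) ≤ ((3 * 2 ^ (n + (m' + 1)) : ℕ) : ℤ) :=
    le_trans hstep (arithA (m' + 1) n k)
  have hfinN : (cosetGraph S P i).dist (baseElt z) (baseElt t) ≤ 3 * 2 ^ (n + (m' + 1)) := by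
    exact_mod_cast hfin
  have hfactor : 3 * 2 ^ (n + (m' + 1)) = (3 * 2 ^ n) * 2 ^ (m' + 1) := by
    rw [pow_add]; ring
  rw [hfactor] at hfinN
  obtain ⟨bz, hbzP, hzeq⟩ := horoSphere_repr hz
  obtain ⟨bt, hbtP, hteq⟩ := horoSphere_repr ht
  rw [hzeq, hteq, baseElt_atLevel, baseElt_atLevel] at hreachC hfinN
  obtain ⟨ω, hω⟩ := claim1 g m' (3 * 2 ^ n) bz bt hbzP hbtP hreachC hfinN
  rw [hzeq, hteq]
  exact ⟨ω.reachable, le_trans (dist_le ω) hω⟩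

/-- Main statement, second half. -/
lemma stmtB (hP : Subgroup.closure (S ∩ (P i : Set G)) = P i)
    {δ : ℕ} (hhyp : SlimTriangles (GMGraph S P) δ)
    (m' : ℕ) (hδm : δ ≤ m' + 1) (n : ℕ) {z t : GMVert G ι}
    (hz : z ∈ horoSphere P i g (m' + 1)) (ht : t ∈ horoSphere P i g (m' + 1))
    (hd : (GMGraph S P).dist z t ≤ 2 * n + 2) :
    (levelGraph S P i g (m' + 1)).Reachable z t ∧
      (levelGraph S P i g (m' + 1)).dist z t ≤ 2 ^ (n + 1) := by
  obtain ⟨hreachC, h, hmh, hineq⟩ := key hP hhyp m' hδm hz ht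
  obtain ⟨k, rfl⟩ := Nat.exists_eq_add_of_le hmh
  have hstep : ((cosetGraph S P i).dist (baseElt z) (baseElt t) : ℤ)
      ≤ ((2 * n + 2 : ℤ) - 2 * k) * 2 ^ (m' + 1 + k) := by
    refine le_trans hineq ?_
    apply mul_le_mul_of_nonneg_right _ (by positivity : (0:ℤ) ≤ 2 ^ (m' + 1 + k))
    have : ((GMGraph S P).dist z t : ℤ) ≤ (2 * n + 2 : ℤ) := by exact_mod_cast hd
    push_cast
    linarith
  have hfin : ((cosetGraph S P i).dist (baseElt z) (baseElt t) : ℤ) ≤ ((2 ^ (n + 1 + (m' + 1)) : ℕ) : ℤ) :=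
    le_trans hstep (arithB (m' + 1) n k)
  have hfinN : (cosetGraph S P i).dist (baseElt z) (baseElt t) ≤ 2 ^ (n + 1 + (m' + 1)) := by
    exact_mod_cast hfin
  have hfactor : (2:ℕ) ^ (n + 1 + (m' + 1)) = (2 ^ (n + 1)) * 2 ^ (m' + 1) := by
    rw [pow_add]
  rw [hfactor] at hfinN
  obtain ⟨bz, hbzP, hzeq⟩ := horoSphere_repr hz
  obtain ⟨bt, hbtP, hteq⟩ := horoSphere_repr ht
  rw [hzeq, hteq, baseElt_atLevel, baseElt_atLevel] at hreachC hfinN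
  obtain ⟨ω, hω⟩ := claim1 g m' (2 ^ (n + 1)) bz bt hbzP hbtP hreachC hfinN
  rw [hzeq, hteq]
  exact ⟨ω.reachable, le_trans (dist_le ω) hω⟩

end GMaux

open GM in
/-- Suppose `z` and `t` are vertices of a horoball `H` of the
Groves–Manning space `X` with `𝒟(z) = 𝒟(t) = m ≥ δ`.  If `d(z,t) ≤ 2n + 3` then
`d^m(z,t) ≤ 3·2^n`, and if `d(z,t) ≤ 2n + 2` then `d^m(z,t) ≤ 2^(n+1)`; consequently
`B_{2n+3}(z) ∩ H(m) ⊆ B̂_{3·2^n}(z)` and `B_{2n+2}(z) ∩ H(m) ⊆ B̂_{2^(n+1)}(z)`.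
In particular, for any integer `k > 0`, `B_k(z) ∩ H(m) ⊆ B̂_{2^(⌊k/2⌋+1)}(z)`. -/
theorem statement_4 {G : Type} [Group G] {ι : Type} [Fintype ι]
    (S : Finset G) (P : ι → Subgroup G)
    (hSgen : Subgroup.closure (S : Set G) = ⊤)
    (hPgen : ∀ i, Subgroup.closure ((S : Set G) ∩ (P i : Set G)) = P i)
    (hProper : ∀ i, P i ≠ ⊤)
    (δ : ℕ) (hδ : 1 ≤ δ) (hhyp : SlimTriangles (GMGraph (S : Set G) P) δ)
    (i : ι) (g : G) (m : ℕ) (hm : δ ≤ m) :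
    (∀ n : ℕ, ∀ z t : GMVert G ι, z ∈ horoSphere P i g m → t ∈ horoSphere P i g m →
      (GMGraph (S : Set G) P).dist z t ≤ 2 * n + 3 →
        (levelGraph (S : Set G) P i g m).Reachable z t ∧
          (levelGraph (S : Set G) P i g m).dist z t ≤ 3 * 2 ^ n) ∧
    (∀ n : ℕ, ∀ z t : GMVert G ι, z ∈ horoSphere P i g m → t ∈ horoSphere P i g m →
      (GMGraph (S : Set G) P).dist z t ≤ 2 * n + 2 →
        (levelGraph (S : Set G) P i g m).Reachable z t ∧
          (levelGraph (S : Set G) P i g m).dist z t ≤ 2 ^ (n + 1)) ∧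
    (∀ n : ℕ, ∀ z : GMVert G ι, z ∈ horoSphere P i g m →
      gball (S : Set G) P z (2 * n + 3) ∩ horoSphere P i g m ⊆
        hatB (S : Set G) P i g m z (3 * 2 ^ n)) ∧
    (∀ n : ℕ, ∀ z : GMVert G ι, z ∈ horoSphere P i g m →
      gball (S : Set G) P z (2 * n + 2) ∩ horoSphere P i g m ⊆
        hatB (S : Set G) P i g m z (2 ^ (n + 1))) ∧
    (∀ k : ℕ, 0 < k → ∀ z : GMVert G ι, z ∈ horoSphere P i g m →
      gball (S : Set G) P z k ∩ horoSphere P i g m ⊆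
        hatB (S : Set G) P i g m z (2 ^ (k / 2 + 1))) := by
  obtain ⟨m', rfl⟩ : ∃ m', m = m' + 1 := ⟨m - 1, by omega⟩
  have hδm : δ ≤ m' + 1 := hm
  have hP := hPgen i
  refine ⟨?_, ?_, ?_, ?_, ?_⟩
  · intro n z t hz ht hd
    exact GMaux.stmtA hP hhyp m' hδm n hz ht hd
  · intro n z t hz ht hd
    exact GMaux.stmtB hP hhyp m' hδm n hz ht hd
  · intro n z hz v hv
    obtain ⟨hv1, hv2⟩ := hv
    have hd : (GMGraph (S : Set G) P).dist z v ≤ 2 * n + 3 := hv1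
    obtain ⟨h1, h2⟩ := GMaux.stmtA hP hhyp m' hδm n hz hv2 hd
    exact ⟨hv2, h1, h2⟩
  · intro n z hz v hv
    obtain ⟨hv1, hv2⟩ := hv
    have hd : (GMGraph (S : Set G) P).dist z v ≤ 2 * n + 2 := hv1
    obtain ⟨h1, h2⟩ := GMaux.stmtB hP hhyp m' hδm n hz hv2 hd
    exact ⟨hv2, h1, h2⟩
  · intro k hk z hz v hv
    obtain ⟨hv1, hv2⟩ := hv
    have hdk : (GMGraph (S : Set G) P).dist z v ≤ k := hv1
    have hd : (GMGraph (S : Set G) P).dist z v ≤ 2 * (k / 2) + 2 := by omega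
    obtain ⟨h1, h2⟩ := GMaux.stmtB hP hhyp m' hδm (k / 2) hz hv2 hd
    exact ⟨hv2, h1, h2⟩
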